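/- Let F_n be the free group of rank n and 𝔈_r(n) = {f ∈ End(F_n) : f(x)x⁻¹ ∈ Γ_{r+1} for all x ∈ F_n}. For each r ≥ 1 and N ≥ r, every element of the quotient monoid 𝔈_r(n)/∼_N is invertible, where f ∼_N g iff f(x)x⁻¹ ≡ g(x)x⁻¹ mod Γ_{N+1} for all x ∈ F_n. In particular 𝔈_r(n)/∼_N is a group. -/

import Mathlib

open scoped commutatorElement

section Aux
variable {G : Type*} [Group G]
open Subgroup

lemma aux_lcs_succ (n : ℕ) :
    (⊤ : Subgroup G).lowerCentralSeries (n + 1) = ⁅(⊤ : Subgroup G).lowerCentralSeries n, (⊤ : Subgroup G)⁆ := rfl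

lemma aux_mul_inv_mem_iff {H : Subgroup G} [H.Normal] {a b : G} :
    a * b⁻¹ ∈ H ↔ (QuotientGroup.mk a : G ⧸ H) = QuotientGroup.mk b := by
  rw [QuotientGroup.eq]
  constructor
  · intro h
    have h2 := Subgroup.Normal.conj_mem ‹H.Normal› _ (H.inv_mem h) a⁻¹
    simpa [mul_assoc] using h2
  · intro h
    have h2 := H.inv_mem (Subgroup.Normal.conj_mem ‹H.Normal› _ h a)
    simpa [mul_assoc] using h2

/-- Three subgroups lemma modulo a normal subgroup. -/
lemma aux_three {H₁ H₂ H₃ N : Subgroup G} [N.Normal]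
    (h1 : ⁅⁅H₂, H₃⁆, H₁⁆ ≤ N) (h2 : ⁅⁅H₃, H₁⁆, H₂⁆ ≤ N) : ⁅⁅H₁, H₂⁆, H₃⁆ ≤ N := by
  let π := QuotientGroup.mk' N
  have hker : π.ker = N := QuotientGroup.ker_mk' N
  have key : ∀ {A B C : Subgroup G}, ⁅⁅A, B⁆, C⁆ ≤ N ↔
      ⁅⁅map π A, map π B⁆, map π C⁆ = ⊥ := by
    intro A B C
    rw [← map_commutator, ← map_commutator, Subgroup.map_eq_bot_iff, hker]
  rw [key]
  exact commutator_commutator_eq_bot_of_rotate (key.mp h1) (key.mp h2)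

/-- `⁅Γ_{m+1}, Γ_{n+1}⁆ ≤ Γ_{m+n+2}` in `lowerCentralSeries` indexing. -/
lemma aux_lcs_comm (m n : ℕ) :
    ⁅(⊤ : Subgroup G).lowerCentralSeries m, (⊤ : Subgroup G).lowerCentralSeries n⁆ ≤ (⊤ : Subgroup G).lowerCentralSeries (m + n + 1) := by
  induction n generalizing m with
  | zero =>
    rw [Subgroup.lowerCentralSeries_zero]
    exact le_of_eq (aux_lcs_succ m).symm
  | succ n ih =>
    rw [aux_lcs_succ n, commutator_comm ((⊤ : Subgroup G).lowerCentralSeries m)]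
    have h1 : ⁅⁅(⊤ : Subgroup G), (⊤ : Subgroup G).lowerCentralSeries m⁆, (⊤ : Subgroup G).lowerCentralSeries n⁆ ≤
        (⊤ : Subgroup G).lowerCentralSeries (m + (n + 1) + 1) := by
      rw [commutator_comm (⊤ : Subgroup G) ((⊤ : Subgroup G).lowerCentralSeries m), ← aux_lcs_succ]
      refine (ih (m + 1)).trans (le_of_eq (by ring_nf))
    have h2 : ⁅⁅(⊤ : Subgroup G).lowerCentralSeries m, (⊤ : Subgroup G).lowerCentralSeries n⁆, (⊤ : Subgroup G)⁆ ≤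
        (⊤ : Subgroup G).lowerCentralSeries (m + (n + 1) + 1) := by
      refine (commutator_mono (ih m) le_rfl).trans ?_
      rw [← aux_lcs_succ]
      exact le_of_eq (by ring_nf)
    exact aux_three h1 h2

/-- A pure group computation: `⁅AX, BY⁆ = ⁅X, Y⁆` when `A` is central,
`X` commutes with `B`, and `B` commutes with `⁅X, Y⁆`. -/
lemma aux_comm_calc {Q : Type*} [Group Q] (A X B Y : Q)
    (hA : ∀ q : Q, Commute A q) (hXB : Commute X B) (hB : Commute B ⁅X, Y⁆) :
    ⁅A * X, B * Y⁆ = ⁅X, Y⁆ := by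
  have c1 : A * (X * B * Y * X⁻¹) = (X * B * Y * X⁻¹) * A := (hA _).eq
  calc ⁅A * X, B * Y⁆ = A * (X * B * Y * X⁻¹) * A⁻¹ * (Y⁻¹ * B⁻¹) := by
        rw [commutatorElement_def]; group
    _ = (X * B * Y * X⁻¹) * (Y⁻¹ * B⁻¹) := by rw [c1]; group
    _ = B * (X * Y * X⁻¹ * Y⁻¹) * B⁻¹ := by rw [hXB.eq]; group
    _ = B * ⁅X, Y⁆ * B⁻¹ := by rw [commutatorElement_def]
    _ = ⁅X, Y⁆ := by rw [hB.eq]; group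

/-- Key lemma (Andreadakis): if `f(x)x⁻¹ ∈ Γ_{r+1}` for all `x`, then for
`c ∈ Γ_{s+1}` one has `f(c)c⁻¹ ∈ Γ_{s+r+1}` (in `lowerCentralSeries` indexing). -/
lemma aux_key (f : G →* G) (r : ℕ) (hf : ∀ x, f x * x⁻¹ ∈ (⊤ : Subgroup G).lowerCentralSeries r) :
    ∀ s, ∀ c ∈ (⊤ : Subgroup G).lowerCentralSeries s, f c * c⁻¹ ∈ (⊤ : Subgroup G).lowerCentralSeries (s + r) := by
  intro s
  induction s with
  | zero => intro c _; simpa using hf c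
  | succ s ih =>
    set M : Subgroup G := (⊤ : Subgroup G).lowerCentralSeries (s + 1 + r) with hM
    suffices h : (⊤ : Subgroup G).lowerCentralSeries (s + 1) ≤ ((QuotientGroup.mk' M).comp f).eqLocus
        (QuotientGroup.mk' M) by
      intro c hc
      have := h hc
      rw [hM, aux_mul_inv_mem_iff]
      exact this
    rw [aux_lcs_succ, Subgroup.commutator_le]
    intro x hx y hy
    show (QuotientGroup.mk (f ⁅x, y⁆) : G ⧸ M) = QuotientGroup.mk ⁅x, y⁆
    have hcomm : ∀ a b : G, ⁅a, b⁆ ∈ M →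
        Commute (QuotientGroup.mk a : G ⧸ M) (QuotientGroup.mk b) := by
      intro a b h
      rw [← commutatorElement_eq_one_iff_commute]
      have : (QuotientGroup.mk ⁅a, b⁆ : G ⧸ M) = 1 := (QuotientGroup.eq_one_iff _).mpr h
      simpa [commutatorElement_def] using this
    set a : G := f x * x⁻¹ with ha
    set b : G := f y * y⁻¹ with hb
    have hax : f x = a * x := by rw [ha]; group
    have hby : f y = b * y := by rw [hb]; group
    have haM : a ∈ (⊤ : Subgroup G).lowerCentralSeries (s + r) := ih x hx
    have hbM : b ∈ (⊤ : Subgroup G).lowerCentralSeries r := hf y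
    have hA : ∀ q : G ⧸ M, Commute (QuotientGroup.mk a) q := by
      intro q
      induction q using QuotientGroup.induction_on with
      | H z =>
        refine hcomm a z ?_
        have : ⁅a, z⁆ ∈ ⁅(⊤ : Subgroup G).lowerCentralSeries (s + r), (⊤ : Subgroup G)⁆ :=
          Subgroup.commutator_mem_commutator haM (Subgroup.mem_top z)
        rw [← aux_lcs_succ] at this
        exact Subgroup.lowerCentralSeries_antitone _ (by omega) this
    have hXB : Commute (QuotientGroup.mk x : G ⧸ M) (QuotientGroup.mk b) := by
      refine hcomm x b ?_
      have : ⁅x, b⁆ ∈ ⁅(⊤ : Subgroup G).lowerCentralSeries s, (⊤ : Subgroup G).lowerCentralSeries r⁆ :=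
        Subgroup.commutator_mem_commutator hx hbM
      exact (aux_lcs_comm s r).trans (Subgroup.lowerCentralSeries_antitone _ (by omega)) this
    have hxyM : ⁅x, y⁆ ∈ (⊤ : Subgroup G).lowerCentralSeries (s + 1) := by
      rw [aux_lcs_succ]
      exact Subgroup.commutator_mem_commutator hx (Subgroup.mem_top y)
    have hB : Commute (QuotientGroup.mk b : G ⧸ M)
        ⁅(QuotientGroup.mk x : G ⧸ M), QuotientGroup.mk y⁆ := by
      have h1 : Commute (QuotientGroup.mk b : G ⧸ M) (QuotientGroup.mk ⁅x, y⁆) := by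
        refine hcomm b ⁅x, y⁆ ?_
        have : ⁅b, ⁅x, y⁆⁆ ∈ ⁅(⊤ : Subgroup G).lowerCentralSeries r, (⊤ : Subgroup G).lowerCentralSeries (s + 1)⁆ :=
          Subgroup.commutator_mem_commutator hbM hxyM
        exact (aux_lcs_comm r (s + 1)).trans (Subgroup.lowerCentralSeries_antitone _ (by omega)) this
      simpa [commutatorElement_def] using h1
    calc (QuotientGroup.mk (f ⁅x, y⁆) : G ⧸ M)
        = ⁅(QuotientGroup.mk (f x) : G ⧸ M), QuotientGroup.mk (f y)⁆ := by
          simp [commutatorElement_def]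
      _ = ⁅(QuotientGroup.mk a : G ⧸ M) * QuotientGroup.mk x,
            (QuotientGroup.mk b : G ⧸ M) * QuotientGroup.mk y⁆ := by
          rw [hax, hby]; simp
      _ = ⁅(QuotientGroup.mk x : G ⧸ M), QuotientGroup.mk y⁆ :=
          aux_comm_calc _ _ _ _ hA hXB hB
      _ = QuotientGroup.mk ⁅x, y⁆ := by simp [commutatorElement_def]

/-- An endomorphism in `𝔈_r` maps each term of the lower central series to itself. -/
lemma aux_map_mem (f : G →* G) (r : ℕ) (hf : ∀ x, f x * x⁻¹ ∈ (⊤ : Subgroup G).lowerCentralSeries r)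
    {t : ℕ} {c : G} (hc : c ∈ (⊤ : Subgroup G).lowerCentralSeries t) : f c ∈ (⊤ : Subgroup G).lowerCentralSeries t := by
  have h1 := aux_key f r hf t c hc
  have h2 : f c = (f c * c⁻¹) * c := by group
  rw [h2]
  exact mul_mem (Subgroup.lowerCentralSeries_antitone _ (Nat.le_add_right t r) h1) hc

/-- Composition lemma: `𝔈_r ∘ 𝔈_k ⊆ 𝔈_r` for `r ≤ k`. -/
lemma aux_comp (f g : G →* G) (r k : ℕ) (hk : r ≤ k)
    (hf : ∀ x, f x * x⁻¹ ∈ (⊤ : Subgroup G).lowerCentralSeries r)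
    (hg : ∀ x, g x * x⁻¹ ∈ (⊤ : Subgroup G).lowerCentralSeries k) :
    ∀ x, f (g x) * x⁻¹ ∈ (⊤ : Subgroup G).lowerCentralSeries r := by
  intro x
  have e : f (g x) * x⁻¹ = f (g x * x⁻¹) * (f x * x⁻¹) := by
    rw [map_mul, map_inv]; group
  rw [e]
  exact mul_mem (aux_map_mem f r hf (Subgroup.lowerCentralSeries_antitone _ hk (hg x))) (hf x)

end Aux

section FG
variable {ι : Type*}
open Subgroup

/-- In a free group, the condition `φ(x)x⁻¹ ∈ H` (for `H` normal) only needs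
to be checked on generators. -/
lemma aux_gen (φ : FreeGroup ι →* FreeGroup ι) (H : Subgroup (FreeGroup ι)) [H.Normal]
    (h : ∀ i, φ (FreeGroup.of i) * (FreeGroup.of i)⁻¹ ∈ H) :
    ∀ x, φ x * x⁻¹ ∈ H := by
  have heq : (QuotientGroup.mk' H).comp φ = QuotientGroup.mk' H := by
    apply FreeGroup.ext_hom
    intro i
    exact aux_mul_inv_mem_iff.mp (h i)
  intro x
  rw [aux_mul_inv_mem_iff]
  exact DFunLike.congr_fun heq x

/-- Newton-type iteration producing better and better approximate right
inverses of `f ∈ 𝔈_r`. -/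
lemma aux_iter (r : ℕ) (hr : 1 ≤ r) (f : FreeGroup ι →* FreeGroup ι)
    (hf : ∀ x, f x * x⁻¹ ∈ (⊤ : Subgroup (FreeGroup ι)).lowerCentralSeries r) (m : ℕ) :
    ∃ g : FreeGroup ι →* FreeGroup ι,
      (∀ x, g x * x⁻¹ ∈ (⊤ : Subgroup (FreeGroup ι)).lowerCentralSeries r) ∧
      (∀ x, f (g x) * x⁻¹ ∈ (⊤ : Subgroup (FreeGroup ι)).lowerCentralSeries ((m + 1) * r)) := by
  induction m with
  | zero =>
    refine ⟨MonoidHom.id _, fun x => by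
      simpa using ((⊤ : Subgroup (FreeGroup ι)).lowerCentralSeries r).one_mem, fun x => ?_⟩
    simpa using hf x
  | succ m ih =>
    obtain ⟨g, hg, hfg⟩ := ih
    set k := (m + 1) * r with hk
    have hrk : r ≤ k := by rw [hk]; nlinarith
    set F := f.comp g with hF
    have hFx : ∀ x, F x * x⁻¹ ∈ (⊤ : Subgroup (FreeGroup ι)).lowerCentralSeries k := hfg
    set h : FreeGroup ι →* FreeGroup ι :=
      FreeGroup.lift (fun i => (F (FreeGroup.of i) * (FreeGroup.of i)⁻¹)⁻¹ * FreeGroup.of i)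
      with hh_def
    have hh_gen : ∀ i, h (FreeGroup.of i) * (FreeGroup.of i)⁻¹ ∈
        (⊤ : Subgroup (FreeGroup ι)).lowerCentralSeries k := by
      intro i
      rw [hh_def, FreeGroup.lift_apply_of]
      have e : (F (FreeGroup.of i) * (FreeGroup.of i)⁻¹)⁻¹ * FreeGroup.of i *
          (FreeGroup.of i)⁻¹ = (F (FreeGroup.of i) * (FreeGroup.of i)⁻¹)⁻¹ := by group
      rw [e]
      exact inv_mem (hFx (FreeGroup.of i))
    have hh : ∀ x, h x * x⁻¹ ∈ (⊤ : Subgroup (FreeGroup ι)).lowerCentralSeries k := aux_gen h _ hh_gen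
    have hFh_gen : ∀ i, (F.comp h) (FreeGroup.of i) * (FreeGroup.of i)⁻¹ ∈
        (⊤ : Subgroup (FreeGroup ι)).lowerCentralSeries (k + r) := by
      intro i
      set a := F (FreeGroup.of i) * (FreeGroup.of i)⁻¹ with ha
      have haM : a ∈ (⊤ : Subgroup (FreeGroup ι)).lowerCentralSeries k := hFx _
      have e : (F.comp h) (FreeGroup.of i) * (FreeGroup.of i)⁻¹ = F a⁻¹ * (a⁻¹)⁻¹ := by
        show F (h (FreeGroup.of i)) * (FreeGroup.of i)⁻¹ = _
        rw [hh_def, FreeGroup.lift_apply_of, ← ha, map_mul, mul_assoc, ← ha, inv_inv]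
      rw [e]
      have := aux_key F k hFx k a⁻¹ (inv_mem haM)
      exact Subgroup.lowerCentralSeries_antitone _ (by omega) this
    have hFh : ∀ x, F (h x) * x⁻¹ ∈ (⊤ : Subgroup (FreeGroup ι)).lowerCentralSeries (k + r) :=
      aux_gen (F.comp h) _ hFh_gen
    refine ⟨g.comp h, ?_, ?_⟩
    · intro x
      have e : (g.comp h) x * x⁻¹ = g (h x * x⁻¹) * (g x * x⁻¹) := by
        show g (h x) * x⁻¹ = _
        rw [map_mul, map_inv]; group
      rw [e]
      exact mul_mem
        (aux_map_mem g r hg (Subgroup.lowerCentralSeries_antitone _ hrk (hh x)))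
        (hg x)
    · intro x
      have e2 : (m + 1 + 1) * r = k + r := by rw [hk]; ring
      rw [e2]
      exact hFh x

end FG

/-- `Gam G k` is the `k`-th term `Γ_k` of the lower central series of `G`
(with the convention `Γ_1 = G`). -/
abbrev Gam (G : Type*) [Group G] (k : ℕ) : Subgroup G := (⊤ : Subgroup G).lowerCentralSeries (k - 1)

/-- Every element of the quotient monoid `𝔈_r(n)/∼_N` is invertible: for each
`f ∈ 𝔈_r(n)` there is a `g ∈ 𝔈_r(n)` with `f∘g ∼_N id` and `g∘f ∼_N id`
(i.e. `f(g(x))x⁻¹ ∈ Γ_{N+1}` and `g(f(x))x⁻¹ ∈ Γ_{N+1}` for all `x`).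
In particular `𝔈_r(n)/∼_N` is a group. -/
theorem stmt5 (n r N : ℕ) (hr : 1 ≤ r) (hrN : r ≤ N)
    (f : FreeGroup (Fin n) →* FreeGroup (Fin n))
    (hf : ∀ x : FreeGroup (Fin n), f x * x⁻¹ ∈ Gam (FreeGroup (Fin n)) (r + 1)) :
    ∃ g : FreeGroup (Fin n) →* FreeGroup (Fin n),
      (∀ x : FreeGroup (Fin n), g x * x⁻¹ ∈ Gam (FreeGroup (Fin n)) (r + 1)) ∧
      (∀ x : FreeGroup (Fin n), f (g x) * x⁻¹ ∈ Gam (FreeGroup (Fin n)) (N + 1)) ∧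
      (∀ x : FreeGroup (Fin n), g (f x) * x⁻¹ ∈ Gam (FreeGroup (Fin n)) (N + 1)) := by
  set G := FreeGroup (Fin n) with hG
  have hf' : ∀ x, f x * x⁻¹ ∈ (⊤ : Subgroup G).lowerCentralSeries r := by
    intro x
    simpa [Gam] using hf x
  have hNle : ∀ x : G, x ∈ (⊤ : Subgroup G).lowerCentralSeries ((N + 1) * r) →
      x ∈ (⊤ : Subgroup G).lowerCentralSeries N := by
    intro x hx
    exact Subgroup.lowerCentralSeries_antitone _ (by nlinarith) hx
  obtain ⟨g, hg, hfg'⟩ := aux_iter r hr f hf' N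
  have hfgN : ∀ x : G, f (g x) * x⁻¹ ∈ (⊤ : Subgroup G).lowerCentralSeries N := fun x => hNle _ (hfg' x)
  obtain ⟨h, hh, hgh'⟩ := aux_iter r hr g hg N
  have hghN : ∀ x : G, g (h x) * x⁻¹ ∈ (⊤ : Subgroup G).lowerCentralSeries N := fun x => hNle _ (hgh' x)
  refine ⟨g, fun x => by simpa [Gam] using hg x, fun x => by simpa [Gam] using hfgN x, ?_⟩
  intro x
  show g (f x) * x⁻¹ ∈ (⊤ : Subgroup G).lowerCentralSeries N
  -- Step 1: `g(f(g(h x))) x⁻¹ ∈ Γ`.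
  have m1 : g (f (g (h x))) * x⁻¹ ∈ (⊤ : Subgroup G).lowerCentralSeries N := by
    have e1 : g (f (g (h x))) * x⁻¹ = g (f (g (h x)) * (h x)⁻¹) * (g (h x) * x⁻¹) := by
      rw [map_mul, map_inv]; group
    rw [e1]
    exact mul_mem (aux_map_mem g r hg (hfgN (h x))) (hghN x)
  -- Step 2: rewrite `g(f(g(h x)))` via `g(h x) = (g(h x) x⁻¹) x`.
  have e2 : g (f (g (h x))) = g (f (g (h x) * x⁻¹)) * g (f x) := by
    have e0 : g (h x) = (g (h x) * x⁻¹) * x := by group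
    calc g (f (g (h x))) = g (f ((g (h x) * x⁻¹) * x)) := by rw [← e0]
      _ = g (f (g (h x) * x⁻¹)) * g (f x) := by rw [map_mul, map_mul]
  have m2 : g (f (g (h x) * x⁻¹)) ∈ (⊤ : Subgroup G).lowerCentralSeries N :=
    aux_map_mem g r hg (aux_map_mem f r hf' (hghN x))
  have e3 : g (f x) * x⁻¹ = (g (f (g (h x) * x⁻¹)))⁻¹ * (g (f (g (h x))) * x⁻¹) := by
    rw [e2]; group
  rw [e3]
  exact mul_mem (inv_mem m2) m1
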